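/- Let R be a finite ring and r ∈ R a nonzero element with 2r = 0. Let Γ_R^r be the graph with vertex set R and distinct vertices x,y adjacent iff [x,y] ≠ r and [y,x] ≠ r. Then 2|E(Γ_R^r)| = |R|^2 - |R| - |R|^2 · Pr_r(R), i.e., Pr_r(R) = 1 - 1/|R| - 2|E(Γ_R^r)|/|R|^2. -/

import Mathlib

/-- The `r`-noncommuting graph of a ring `R`: distinct `x`, `y` are adjacent iff
`[x,y] ≠ r` and `[y,x] ≠ r`. -/
def rNoncommGraph (R : Type*) [Ring R] (r : R) : SimpleGraph R where
  Adj x y := x ≠ y ∧ x * y - y * x ≠ r ∧ y * x - x * y ≠ r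
  symm := by
    constructor
    rintro x y ⟨h1, h2, h3⟩
    exact ⟨h1.symm, h3, h2⟩
  loopless := by constructor; rintro x ⟨h1, _⟩; exact h1 rfl

theorem stmt_10 (R : Type*) [Ring R] [Fintype R] (r : R) (hr : r ≠ 0) (h2r : 2 • r = 0) :
    2 * Nat.card (rNoncommGraph R r).edgeSet + Fintype.card R +
        Nat.card {p : R × R | p.1 * p.2 - p.2 * p.1 = r} =
      Fintype.card R ^ 2 := by
  classical
  have hrr : r + r = 0 := by simpa [two_smul] using h2r
  have hneg : -r = r := neg_eq_of_add_eq_zero_left hrr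
  set G := rNoncommGraph R r with hG
  have h1 : Nat.card G.edgeSet = G.edgeFinset.card := by
    simp [Nat.card_coe_set_eq, SimpleGraph.edgeFinset, Set.ncard_eq_toFinset_card']
  have eqv : G.Dart ≃ {p : R × R // G.Adj p.1 p.2} :=
    { toFun := fun d => ⟨d.toProd, d.adj⟩
      invFun := fun p => ⟨p.1, p.2⟩
      left_inv := fun d => by cases d; rfl
      right_inv := fun p => rfl }
  have h2 : (Finset.univ.filter (fun p : R × R => G.Adj p.1 p.2)).card
      = 2 * G.edgeFinset.card := by
    rw [← Fintype.card_subtype, ← Fintype.card_congr eqv,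
      G.dart_card_eq_twice_card_edges]
  have h3 : Nat.card {p : R × R | p.1 * p.2 - p.2 * p.1 = r}
      = (Finset.univ.filter (fun p : R × R => p.1 * p.2 - p.2 * p.1 = r)).card := by
    rw [Nat.card_eq_fintype_card]
    simpa using (Fintype.card_subtype (fun p : R × R => p.1 * p.2 - p.2 * p.1 = r))
  have h4 : (Finset.univ.filter (fun p : R × R => p.1 = p.2)).card = Fintype.card R := by
    rw [show (Finset.univ.filter (fun p : R × R => p.1 = p.2))
        = (Finset.univ : Finset R).diag from by ext p; simp [Finset.mem_diag]]
    simp [Finset.diag_card]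
  have key : ∀ p : R × R,
      (if G.Adj p.1 p.2 then 1 else 0) + (if p.1 = p.2 then 1 else 0)
        + (if p.1 * p.2 - p.2 * p.1 = r then 1 else 0) = 1 := by
    rintro ⟨x, y⟩
    dsimp only
    by_cases hxy : x = y
    · subst hxy
      simp [hG, rNoncommGraph, sub_self, Ne.symm hr]
    · by_cases hc : x * y - y * x = r
      · have : ¬ G.Adj x y := by
          rw [hG]; rintro ⟨_, h, _⟩; exact h hc
        simp [this, hxy, hc]
      · have hc2 : y * x - x * y ≠ r := fun h => hc (by rw [← hneg, ← h, neg_sub])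
        have : G.Adj x y := ⟨hxy, hc, hc2⟩
        simp [this, hxy, hc]
  have h5 : (Finset.univ.filter (fun p : R × R => G.Adj p.1 p.2)).card
      + (Finset.univ.filter (fun p : R × R => p.1 = p.2)).card
      + (Finset.univ.filter (fun p : R × R => p.1 * p.2 - p.2 * p.1 = r)).card
      = Fintype.card (R × R) := by
    rw [Finset.card_filter, Finset.card_filter, Finset.card_filter,
      ← Finset.sum_add_distrib, ← Finset.sum_add_distrib]
    simp only [key]
    simp [Finset.card_univ]
  rw [h1, h3, ← h2,
    show Fintype.card R ^ 2 = Fintype.card (R × R) from by rw [Fintype.card_prod, sq],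
    ← h5, h4]
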